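/- Fix α ∈ (0, 1/2] and set β* = (1 − √(1−2α))/2. Then the function g(β) = f_A(α,β) − h(β) on [α/2, 1/2] attains its maximum at β*: for all β ∈ [α/2, 1/2], f_A(α,β) − h(β) ≤ f_A(α,β*) − h(β*). Moreover g is increasing on [α/2, β*] and decreasing on [β*, 1/2]. -/

import Mathlib

/-- Binary entropy function (base-2 logs), with the convention `0 * log 0 = 0`. -/
noncomputable def binEnt (x : ℝ) : ℝ :=
  -(x * Real.logb 2 x) - (1 - x) * Real.logb 2 (1 - x)

/-- The spectral shape exponent of the accumulator:
`f_A(α,β) = α − h(β) + (1−α)·h((β−α/2)/(1−α))`. -/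
noncomputable def fA (α β : ℝ) : ℝ :=
  α - binEnt β + (1 - α) * binEnt ((β - α / 2) / (1 - α))

/-- The spectral shape exponent of the discrete derivative:
`f_D(α,β) = (1−α)·h(β/(2(1−α))) + α·h(β/(2α)) − h(α)`. -/
noncomputable def fD (α β : ℝ) : ℝ :=
  (1 - α) * binEnt (β / (2 * (1 - α))) + α * binEnt (β / (2 * α)) - binEnt α

/-- For fixed `α ∈ (0, 1/2]` and `β* = (1 − √(1−2α))/2`, the function
`g(β) = f_A(α,β) − h(β)` on `[α/2, 1/2]` attains its maximum at `β*`; moreover it is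
increasing on `[α/2, β*]` and decreasing on `[β*, 1/2]`. -/
lemma binEnt_eq (x : ℝ) : binEnt x = Real.binEntropy x / Real.log 2 := by
  unfold binEnt Real.binEntropy Real.logb
  rw [Real.log_inv, Real.log_inv]
  ring

lemma continuous_binEnt : Continuous binEnt := by
  have : binEnt = fun x => Real.binEntropy x / Real.log 2 := funext binEnt_eq
  rw [this]
  exact Real.binEntropy_continuous.div_const _

lemma g_eq (α β : ℝ) : fA α β - binEnt β =
    α + ((1 - α) * Real.binEntropy ((β - α / 2) / (1 - α)) - 2 * Real.binEntropy β)
      / Real.log 2 := by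
  simp only [fA, binEnt_eq]
  ring

lemma hasDerivAt_g (α x : ℝ) (hα0 : 0 < α) (hα1 : α ≤ 1 / 2)
    (hx0 : α / 2 < x) (hx1 : x < 1 / 2) :
    HasDerivAt (fun β => fA α β - binEnt β)
      (((Real.log (1 - (x - α / 2) / (1 - α)) - Real.log ((x - α / 2) / (1 - α)))
        - 2 * (Real.log (1 - x) - Real.log x)) / Real.log 2) x := by
  have h1α : (0:ℝ) < 1 - α := by linarith
  set u : ℝ := (x - α / 2) / (1 - α) with hu
  have hu0 : 0 < u := div_pos (by linarith) h1α
  have hu1 : u < 1 := by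
    rw [hu, div_lt_one h1α]; linarith
  have hxpos : 0 < x := by linarith
  have hdu : HasDerivAt (fun β : ℝ => (β - α / 2) / (1 - α)) (1 / (1 - α)) x := by
    simpa using ((hasDerivAt_id x).sub_const (α / 2)).div_const (1 - α)
  have hbu : HasDerivAt (fun β : ℝ => Real.binEntropy ((β - α / 2) / (1 - α)))
      ((Real.log (1 - u) - Real.log u) * (1 / (1 - α))) x :=
    HasDerivAt.comp (h₂ := Real.binEntropy) x (Real.hasDerivAt_binEntropy hu0.ne' hu1.ne) hdu
  have hbx : HasDerivAt Real.binEntropy (Real.log (1 - x) - Real.log x) x :=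
    Real.hasDerivAt_binEntropy hxpos.ne' (by linarith)
  have hmain : HasDerivAt (fun β => fA α β - binEnt β)
      (((1 - α) * ((Real.log (1 - u) - Real.log u) * (1 / (1 - α)))
        - 2 * (Real.log (1 - x) - Real.log x)) / Real.log 2) x := by
    have : (fun β => fA α β - binEnt β) = fun β =>
        α + ((1 - α) * Real.binEntropy ((β - α / 2) / (1 - α)) - 2 * Real.binEntropy β)
          / Real.log 2 := funext (g_eq α)
    rw [this]
    exact (((hbu.const_mul (1 - α)).sub (hbx.const_mul 2)).div_const _).const_add α
  convert hmain using 2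
  field_simp

lemma num_lt (α x : ℝ) (hα0 : 0 < α) (hα1 : α ≤ 1 / 2) (hx0 : α / 2 < x) (hx1 : x < 1 / 2)
    (hpoly : (x - α / 2) * (1 - x) ^ 2 < (1 - α / 2 - x) * x ^ 2) :
    2 * (Real.log (1 - x) - Real.log x) <
      Real.log (1 - (x - α / 2) / (1 - α)) - Real.log ((x - α / 2) / (1 - α)) := by
  have h1α : (0:ℝ) < 1 - α := by linarith
  have hA : (0:ℝ) < x - α / 2 := by linarith
  have hB : (0:ℝ) < 1 - α / 2 - x := by linarith
  have hxpos : (0:ℝ) < x := by linarith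
  have hx1' : (0:ℝ) < 1 - x := by linarith
  have hupos : (0:ℝ) < (x - α / 2) / (1 - α) := div_pos hA h1α
  have hvpos : (0:ℝ) < (1 - α / 2 - x) / (1 - α) := div_pos hB h1α
  have hsq1 : ((1 - x) ^ 2 : ℝ) ≠ 0 := by positivity
  have hsq2 : (x ^ 2 : ℝ) ≠ 0 := by positivity
  have h1u : 1 - (x - α / 2) / (1 - α) = (1 - α / 2 - x) / (1 - α) := by
    field_simp; ring
  have h2 : ((x - α / 2) / (1 - α)) * (1 - x) ^ 2
      < ((1 - α / 2 - x) / (1 - α)) * x ^ 2 := by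
    rw [div_mul_eq_mul_div, div_mul_eq_mul_div]
    exact div_lt_div_of_pos_right hpoly h1α
  have hl := Real.log_lt_log (by positivity) h2
  rw [Real.log_mul hupos.ne' hsq1, Real.log_mul hvpos.ne' hsq2,
    Real.log_pow, Real.log_pow] at hl
  rw [h1u]
  push_cast at hl
  linarith

lemma num_gt (α x : ℝ) (hα0 : 0 < α) (hα1 : α ≤ 1 / 2) (hx0 : α / 2 < x) (hx1 : x < 1 / 2)
    (hpoly : (1 - α / 2 - x) * x ^ 2 < (x - α / 2) * (1 - x) ^ 2) :
    Real.log (1 - (x - α / 2) / (1 - α)) - Real.log ((x - α / 2) / (1 - α)) <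
      2 * (Real.log (1 - x) - Real.log x) := by
  have h1α : (0:ℝ) < 1 - α := by linarith
  have hA : (0:ℝ) < x - α / 2 := by linarith
  have hB : (0:ℝ) < 1 - α / 2 - x := by linarith
  have hxpos : (0:ℝ) < x := by linarith
  have hx1' : (0:ℝ) < 1 - x := by linarith
  have hupos : (0:ℝ) < (x - α / 2) / (1 - α) := div_pos hA h1α
  have hvpos : (0:ℝ) < (1 - α / 2 - x) / (1 - α) := div_pos hB h1α
  have hsq1 : ((1 - x) ^ 2 : ℝ) ≠ 0 := by positivity
  have hsq2 : (x ^ 2 : ℝ) ≠ 0 := by positivity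
  have h1u : 1 - (x - α / 2) / (1 - α) = (1 - α / 2 - x) / (1 - α) := by
    field_simp; ring
  have h2 : ((1 - α / 2 - x) / (1 - α)) * x ^ 2
      < ((x - α / 2) / (1 - α)) * (1 - x) ^ 2 := by
    rw [div_mul_eq_mul_div, div_mul_eq_mul_div]
    exact div_lt_div_of_pos_right hpoly h1α
  have hl := Real.log_lt_log (by positivity) h2
  rw [Real.log_mul hupos.ne' hsq1, Real.log_mul hvpos.ne' hsq2,
    Real.log_pow, Real.log_pow] at hl
  rw [h1u]
  push_cast at hl
  linarith

theorem fA_sub_entropy_max_at_sqrt (α : ℝ) (hα0 : 0 < α) (hα1 : α ≤ 1 / 2) :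
    (∀ β : ℝ, α / 2 ≤ β → β ≤ 1 / 2 →
      fA α β - binEnt β ≤
        fA α ((1 - Real.sqrt (1 - 2 * α)) / 2) - binEnt ((1 - Real.sqrt (1 - 2 * α)) / 2)) ∧
    (∀ β₁ β₂ : ℝ, α / 2 ≤ β₁ → β₁ ≤ β₂ → β₂ ≤ (1 - Real.sqrt (1 - 2 * α)) / 2 →
      fA α β₁ - binEnt β₁ ≤ fA α β₂ - binEnt β₂) ∧
    (∀ β₁ β₂ : ℝ, (1 - Real.sqrt (1 - 2 * α)) / 2 ≤ β₁ → β₁ ≤ β₂ → β₂ ≤ 1 / 2 →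
      fA α β₂ - binEnt β₂ ≤ fA α β₁ - binEnt β₁) := by
  set s := Real.sqrt (1 - 2 * α) with hsdef
  have hs0 : 0 ≤ s := Real.sqrt_nonneg _
  have hs2 : s ^ 2 = 1 - 2 * α := Real.sq_sqrt (by linarith)
  have hs1 : s ≤ 1 - α := by nlinarith
  set b : ℝ := (1 - s) / 2 with hbdef
  have hb1 : α / 2 ≤ b := by rw [hbdef]; linarith
  have hb2 : b ≤ 1 / 2 := by rw [hbdef]; linarith
  have hcont : Continuous (fun β => fA α β - binEnt β) := by
    have c1 : Continuous fun β : ℝ => (β - α / 2) / (1 - α) :=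
      (continuous_id.sub continuous_const).div_const _
    simp only [fA]
    exact ((continuous_const.sub continuous_binEnt).add
      (continuous_const.mul (continuous_binEnt.comp c1))).sub continuous_binEnt
  -- increasing part
  have hmono : StrictMonoOn (fun β => fA α β - binEnt β) (Set.Icc (α / 2) b) := by
    apply strictMonoOn_of_deriv_pos (convex_Icc _ _) hcont.continuousOn
    intro x hx
    rw [interior_Icc] at hx
    obtain ⟨hx1, hx2⟩ := hx
    have hx3 : x < 1 / 2 := lt_of_lt_of_le hx2 hb2
    rw [(hasDerivAt_g α x hα0 hα1 hx1 hx3).deriv]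
    apply div_pos ?_ (Real.log_pos one_lt_two)
    have hpoly : (x - α / 2) * (1 - x) ^ 2 < (1 - α / 2 - x) * x ^ 2 := by
      have ha : (0:ℝ) < (1 - s) / 2 - x := by rw [hbdef] at hx2; linarith
      have hbb : (0:ℝ) < 1 / 2 - x := by linarith
      have hc : (0:ℝ) < (1 + s) / 2 - x := by linarith
      nlinarith [mul_pos (mul_pos ha hbb) hc, hs2]
    linarith [num_lt α x hα0 hα1 hx1 hx3 hpoly]
  -- decreasing part
  have hanti : StrictAntiOn (fun β => fA α β - binEnt β) (Set.Icc b (1 / 2)) := by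
    apply strictAntiOn_of_deriv_neg (convex_Icc _ _) hcont.continuousOn
    intro x hx
    rw [interior_Icc] at hx
    obtain ⟨hx1, hx2⟩ := hx
    have hx0 : α / 2 < x := lt_of_le_of_lt hb1 hx1
    rw [(hasDerivAt_g α x hα0 hα1 hx0 hx2).deriv]
    apply div_neg_of_neg_of_pos ?_ (Real.log_pos one_lt_two)
    have hpoly : (1 - α / 2 - x) * x ^ 2 < (x - α / 2) * (1 - x) ^ 2 := by
      have ha : (0:ℝ) < x - (1 - s) / 2 := by rw [hbdef] at hx1; linarith
      have hbb : (0:ℝ) < 1 / 2 - x := by linarith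
      have hc : (0:ℝ) < (1 + s) / 2 - x := by linarith
      nlinarith [mul_pos (mul_pos ha hbb) hc, hs2]
    linarith [num_gt α x hα0 hα1 hx0 hx2 hpoly]
  refine ⟨?_, ?_, ?_⟩
  · intro β hβ1 hβ2
    rcases le_total β b with h | h
    · exact hmono.monotoneOn ⟨hβ1, h⟩ ⟨hb1, le_rfl⟩ h
    · exact (hanti.antitoneOn ⟨le_rfl, hb2⟩ ⟨h, hβ2⟩ h)
  · intro β₁ β₂ h1 h12 h2
    exact hmono.monotoneOn ⟨h1, le_trans h12 h2⟩ ⟨le_trans h1 h12, h2⟩ h12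
  · intro β₁ β₂ h1 h12 h2
    exact hanti.antitoneOn ⟨h1, le_trans h12 h2⟩ ⟨le_trans h1 h12, h2⟩ h12
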